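/- Under hypothesis (H1), for y⁰ ∈ A + ℝk and y¹ ∈ 0⁺A + ℝk, one has y⁰ + y¹ ∈ A + ℝk and φ_{A,k}(y⁰ + y¹) ≤ φ_{A,k}(y⁰) + φ_{0⁺A,k}(y¹). -/

import Mathlib

open Set Pointwise

noncomputable def phiF {Y : Type*} [AddCommGroup Y] [Module ℝ Y] (A : Set Y) (k : Y) (y : Y) : EReal :=
  sInf ((fun t : ℝ => (t : EReal)) '' {t : ℝ | y - t • k ∈ A})

def recCone {Y : Type*} [AddCommGroup Y] [Module ℝ Y] (A : Set Y) : Set Y :=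
  {u | ∀ a ∈ A, ∀ t : ℝ, 0 ≤ t → a + t • u ∈ A}

def algInterior {Y : Type*} [AddCommGroup Y] [Module ℝ Y] (C : Set Y) : Set Y :=
  {x ∈ C | ∀ y : Y, ∃ ε : ℝ, 0 < ε ∧ ∀ t : ℝ, 0 ≤ t → t ≤ ε → x + t • y ∈ C}

private lemma ereal_aux {X a b : EReal} (haT : a ≠ ⊤) (hbT : b ≠ ⊤)
    (key : ∀ a' b' : ℝ, a < (a' : EReal) → b < (b' : EReal) → X ≤ ((a' + b' : ℝ) : EReal)) :
    X ≤ a + b := by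
  rw [← EReal.le_of_forall_lt_iff_le]
  intro z hz
  rcases eq_or_ne a ⊥ with haB | haB
  · obtain ⟨b', hb'⟩ := EReal.exists_between_coe_real (lt_top_iff_ne_top.2 hbT)
    have := key (z - b') b' (haB ▸ EReal.bot_lt_coe _) hb'.1
    simpa using this
  · rcases eq_or_ne b ⊥ with hbB | hbB
    · obtain ⟨a', ha'⟩ := EReal.exists_between_coe_real (lt_top_iff_ne_top.2 haT)
      have := key a' (z - a') ha'.1 (hbB ▸ EReal.bot_lt_coe _)
      simpa [add_comm] using this
    · lift a to ℝ using ⟨haT, haB⟩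
      lift b to ℝ using ⟨hbT, hbB⟩
      have hzr : a + b < z := by exact_mod_cast hz
      set δ := (z - a - b) / 2 with hδ
      have hδ0 : 0 < δ := by dsimp [δ]; linarith
      have := key (a + δ) (b + δ) (by exact_mod_cast lt_add_of_pos_right _ hδ0)
        (by exact_mod_cast lt_add_of_pos_right _ hδ0)
      refine this.trans ?_
      have he : a + δ + (b + δ) = z := by dsimp [δ]; ring
      rw [he]

private lemma sInf_add_aux {S T₀ T₁ : Set ℝ}
    (h : ∀ t₀ ∈ T₀, ∀ t₁ ∈ T₁, t₀ + t₁ ∈ S) (h0 : T₀.Nonempty) (h1 : T₁.Nonempty) :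
    sInf ((fun t : ℝ => (t : EReal)) '' S) ≤
      sInf ((fun t : ℝ => (t : EReal)) '' T₀) + sInf ((fun t : ℝ => (t : EReal)) '' T₁) := by
  obtain ⟨s₀, hs₀⟩ := h0
  obtain ⟨s₁, hs₁⟩ := h1
  have le₀ : sInf ((fun t : ℝ => (t : EReal)) '' T₀) ≤ (s₀ : EReal) :=
    sInf_le (mem_image_of_mem (fun t : ℝ => (t : EReal)) hs₀)
  have le₁ : sInf ((fun t : ℝ => (t : EReal)) '' T₁) ≤ (s₁ : EReal) :=
    sInf_le (mem_image_of_mem (fun t : ℝ => (t : EReal)) hs₁)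
  refine ereal_aux (fun h' => by simp [h', top_le_iff] at le₀)
    (fun h' => by simp [h', top_le_iff] at le₁) ?_
  intro a' b' ha' hb'
  obtain ⟨x, hx, hxlt⟩ := sInf_lt_iff.1 ha'
  obtain ⟨y, hy, hylt⟩ := sInf_lt_iff.1 hb'
  obtain ⟨t₀, ht₀, rfl⟩ := hx
  obtain ⟨t₁, ht₁, rfl⟩ := hy
  have hmem : t₀ + t₁ ∈ S := h t₀ ht₀ t₁ ht₁
  have hle : sInf ((fun t : ℝ => (t : EReal)) '' S) ≤ ((t₀ + t₁ : ℝ) : EReal) :=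
    sInf_le (mem_image_of_mem (fun t : ℝ => (t : EReal)) hmem)
  refine hle.trans ?_
  have h0' : t₀ < a' := by simpa using hxlt
  have h1' : t₁ < b' := by simpa using hylt
  exact_mod_cast (add_lt_add h0' h1').le

theorem stmt_12 {Y : Type*} [AddCommGroup Y] [Module ℝ Y] [TopologicalSpace Y]
    [IsTopologicalAddGroup Y] [ContinuousSMul ℝ Y]
    (A : Set Y) (hAc : IsClosed A) (hAne : A.Nonempty) (hAp : A ≠ Set.univ)
    (k : Y) (hk : k ≠ 0) (hrec : ∀ a ∈ A, ∀ t : ℝ, 0 ≤ t → a - t • k ∈ A)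
    (y₀ y₁ : Y) (hy₀ : ∃ t : ℝ, y₀ - t • k ∈ A) (hy₁ : ∃ t : ℝ, y₁ - t • k ∈ recCone A) :
    (∃ t : ℝ, (y₀ + y₁) - t • k ∈ A) ∧
      phiF A k (y₀ + y₁) ≤ phiF A k y₀ + phiF (recCone A) k y₁ := by
  have hcomb : ∀ t₀ ∈ {t : ℝ | y₀ - t • k ∈ A}, ∀ t₁ ∈ {t : ℝ | y₁ - t • k ∈ recCone A},
      t₀ + t₁ ∈ {t : ℝ | (y₀ + y₁) - t • k ∈ A} := by
    intro t₀ ht₀ t₁ ht₁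
    have h1 : (y₀ - t₀ • k) + (1 : ℝ) • (y₁ - t₁ • k) ∈ A :=
      ht₁ _ ht₀ 1 zero_le_one
    have heq : (y₀ + y₁) - (t₀ + t₁) • k = (y₀ - t₀ • k) + (1 : ℝ) • (y₁ - t₁ • k) := by
      rw [add_smul, one_smul]; abel
    simpa [Set.mem_setOf_eq, heq] using h1
  constructor
  · obtain ⟨t₀, ht₀⟩ := hy₀
    obtain ⟨t₁, ht₁⟩ := hy₁
    exact ⟨t₀ + t₁, hcomb t₀ ht₀ t₁ ht₁⟩
  · exact sInf_add_aux hcomb hy₀ hy₁
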